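/- Under the setting of the tetrahedral atomistic Cauchy–Born energy Φ̃^{a,CB}(y) = (ε³/6) Σ_{ℓ∈𝔏} Σ_{T⊂K_ℓ} Σ_{η∈R} φ_η(∇̃y|_T η) on a periodic lattice, the energy is consistent: for the homogeneous deformation y_F(x) = Fx (F a 3×3 matrix) and every periodic piecewise-linear test function v on the type A tetrahedral mesh, the first variation vanishes: ⟨DΦ̃^{a,CB}(y_F), v⟩ = 0. -/

import Mathlib

open MeasureTheory

noncomputable section

/-- ℝ³ as a Euclidean space. -/
abbrev E3 := EuclideanSpace ℝ (Fin 3)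

/-- Build a point of `E3` from a plain function. -/
def ev (f : Fin 3 → ℝ) : E3 := WithLp.toLp 2 f

/-- The `α`-th standard basis vector of ℝ³. -/
def e3 (α : Fin 3) : E3 := EuclideanSpace.single α 1

/-- The lattice point `x_ℓ = εℓ`. -/
def latPt (ε : ℝ) (ℓ : Fin 3 → ℤ) : E3 := ev fun i => ε * (ℓ i : ℝ)

/-- The (closed) tetrahedron of the type A (Kuhn) decomposition of the cell
`K_ℓ = εℓ + [0,ε]³` associated to the permutation `σ`. -/
def cellTet (ε : ℝ) (ℓ : Fin 3 → ℤ) (σ : Equiv.Perm (Fin 3)) : Set E3 :=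
  {x | 0 ≤ (x - latPt ε ℓ) (σ 0) ∧ (x - latPt ε ℓ) (σ 0) ≤ (x - latPt ε ℓ) (σ 1) ∧
       (x - latPt ε ℓ) (σ 1) ≤ (x - latPt ε ℓ) (σ 2) ∧ (x - latPt ε ℓ) (σ 2) ≤ ε}

/-- Starting point of the unique edge of `cellTet ε ℓ σ` parallel to `e_α`. -/
def qEdge (ε : ℝ) (ℓ : Fin 3 → ℤ) (σ : Equiv.Perm (Fin 3)) (α : Fin 3) : E3 :=
  latPt ε ℓ + ev fun i => if σ.symm α < σ.symm i then ε else 0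

/-- The discrete gradient `∇̃w|_T` of `w : E3 → E3` on the tetrahedron `cellTet ε ℓ σ`,
applied to the interaction vector `η ∈ ℤ³`:  `∇̃w|_T η = Σ_α η_α D̃_{e_α} w`, where
`D̃_{e_α} w` is the difference quotient of `w` along the unique edge of the tetrahedron
parallel to `e_α`. -/
def discrGradApply (ε : ℝ) (w : E3 → E3) (ℓ : Fin 3 → ℤ) (σ : Equiv.Perm (Fin 3))
    (η : Fin 3 → ℤ) : E3 :=
  ∑ α : Fin 3, ((η α : ℝ) / ε) • (w (qEdge ε ℓ σ α + ε • e3 α) - w (qEdge ε ℓ σ α))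

lemma e3_apply (α i : Fin 3) : e3 α i = if i = α then 1 else 0 := by
  simp [e3, EuclideanSpace.single_apply]

/-- Key periodicity lemma: the sum over all lattice cells of the increment of a periodic
function along direction `α` vanishes (telescoping over the torus). -/
lemma key_periodic (n : ℕ) (ε : ℝ) (hε : ε = 1 / ((n+1 : ℕ) : ℝ)) (α : Fin 3)
    (w : E3 → E3) (hw : ∀ x, w (x + e3 α) = w x) :
    ∑ ℓ : Fin 3 → Fin (n+1), (w (latPt ε (fun i => (ℓ i : ℤ)) + ε • e3 α)
      - w (latPt ε (fun i => (ℓ i : ℤ)))) = 0 := by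
  rw [Finset.sum_sub_distrib, sub_eq_zero]
  have hεk : ε * ((n+1:ℕ) : ℝ) = 1 := by
    rw [hε]; field_simp
  set e : (Fin 3 → Fin (n+1)) ≃ (Fin 3 → Fin (n+1)) :=
    Equiv.piCongrRight (fun i => if i = α then Equiv.addRight (1 : Fin (n+1)) else Equiv.refl _)
    with he
  apply Fintype.sum_equiv e
  intro ℓ
  have happ : ∀ i, e ℓ i = if i = α then ℓ i + 1 else ℓ i := by
    intro i; by_cases h : i = α <;> simp [he, Equiv.piCongrRight, h]
  by_cases hlast : ℓ α = Fin.last n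
  · -- wrap-around case
    have hpt : latPt ε (fun i => ((e ℓ) i : ℤ)) =
        latPt ε (fun i => (ℓ i : ℤ)) + ε • e3 α - e3 α := by
      ext i
      show ε * ((e ℓ i : ℤ) : ℝ) =
        ε * ((ℓ i : ℤ) : ℝ) + ε * e3 α i - e3 α i
      rw [happ]
      by_cases h : i = α
      · subst h
        have h0 : (ℓ i + 1 : Fin (n+1)) = 0 := by rw [hlast]; simp [Fin.last_add_one]
        rw [if_pos rfl, h0, e3_apply, if_pos rfl]
        rw [hlast]
        have hεk' : ε * ((n:ℝ) + 1) = 1 := by push_cast at hεk; linarith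
        push_cast [Fin.val_last, Fin.val_zero]
        linarith
      · rw [if_neg h, e3_apply, if_neg h]; ring
    rw [hpt]
    have h2 := hw (latPt ε (fun i => (ℓ i : ℤ)) + ε • e3 α - e3 α)
    rw [sub_add_cancel] at h2
    exact h2
  · -- no wrap-around
    have hpt : latPt ε (fun i => ((e ℓ) i : ℤ)) =
        latPt ε (fun i => (ℓ i : ℤ)) + ε • e3 α := by
      ext i
      show ε * ((e ℓ i : ℤ) : ℝ) = ε * ((ℓ i : ℤ) : ℝ) + ε * e3 α i
      rw [happ]
      by_cases h : i = α
      · subst h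
        have hv : ((ℓ i + 1 : Fin (n+1)) : ℕ) = (ℓ i : ℕ) + 1 := by
          rw [Fin.val_add_one]; simp [hlast]
        rw [if_pos rfl, e3_apply, if_pos rfl]
        push_cast [hv]
        ring
      · rw [if_neg h, e3_apply, if_neg h]; ring
    rw [hpt]

lemma ev_sum {ι : Type*} (s : Finset ι) (f : ι → Fin 3 → ℝ) :
    (∑ a ∈ s, ev (f a)) = ev (fun i => ∑ a ∈ s, f a i) := by
  classical
  induction s using Finset.induction with
  | empty => ext i; simp [ev]
  | insert _ _ h ih =>
      rw [Finset.sum_insert h, ih]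
      ext i
      show f _ i + (∑ a ∈ _, f a i) = _
      simp [Finset.sum_insert h, ev]

/-- consistency of the tetrahedral atomistic Cauchy–Born energy.
For the homogeneous deformation `y_F(x) = Fx` and every continuous, periodic, piecewise
linear test function `v` on the type A tetrahedral mesh of the scaled lattice `εℤ³`
(`ε = 1/k`) over the periodic domain, the first variation of
`Φ̃^{a,CB}(y) = (ε³/6) Σ_ℓ Σ_T Σ_{η∈R} φ_η(∇̃y|_T η)` vanishes:
`⟨DΦ̃^{a,CB}(y_F), v⟩ = (ε³/6) Σ_ℓ Σ_T Σ_{η∈R} φ_η′(∇̃y_F|_T η)·(∇̃v|_T η) = 0`. -/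
theorem stmt7 (k : ℕ) (hk : 0 < k) (ε : ℝ) (hε : ε = 1 / (k : ℝ))
    (R : Finset (Fin 3 → ℤ)) (φ : (Fin 3 → ℤ) → E3 → ℝ)
    (hφ : ∀ η ∈ R, ContDiff ℝ 1 (φ η))
    (F : Fin 3 → Fin 3 → ℝ)
    (yF : E3 → E3) (hyF : ∀ x, yF x = ev fun i => ∑ j, F i j * x j)
    (v : E3 → E3) (hcont : Continuous v)
    (hper : ∀ (x : E3) (i : Fin 3), v (x + e3 i) = v x)
    (hpl : ∀ (ℓ : Fin 3 → ℤ) (σ : Equiv.Perm (Fin 3)), ∃ (A : E3 →L[ℝ] E3) (c : E3),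
      ∀ x ∈ cellTet ε ℓ σ, v x = A x + c) :
    ε ^ 3 / 6 * ∑ ℓ : Fin 3 → Fin k, ∑ σ : Equiv.Perm (Fin 3), ∑ η ∈ R,
        fderiv ℝ (φ η) (discrGradApply ε yF (fun i => (ℓ i : ℤ)) σ η)
          (discrGradApply ε v (fun i => (ℓ i : ℤ)) σ η) = 0 := by
  classical
  obtain ⟨n, rfl⟩ : ∃ n, k = n + 1 := ⟨k - 1, (Nat.succ_pred_eq_of_pos hk).symm⟩
  have hεne : ε ≠ 0 := by
    rw [hε]
    positivity
  -- the discrete gradient of the homogeneous deformation is constant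
  have hyFdiff : ∀ (q : E3) (α : Fin 3), yF (q + ε • e3 α) - yF q = ev fun i => ε * F i α := by
    intro q α
    ext i
    show (yF (q + ε • e3 α)) i - (yF q) i = ε * F i α
    rw [hyF, hyF]
    show (∑ j, F i j * (q + ε • e3 α) j) - (∑ j, F i j * q j) = ε * F i α
    have hco : ∀ j, (q + ε • e3 α) j = q j + ε * (if j = α then 1 else 0) := by
      intro j
      show q j + ε * e3 α j = _
      rw [e3_apply]
    simp only [hco, mul_add, Finset.sum_add_distrib, mul_ite, mul_one, mul_zero]
    simp [Finset.sum_ite_eq']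
    ring
  set C : (Fin 3 → ℤ) → E3 := fun η => ev fun i => ∑ α, (η α : ℝ) * F i α with hCdef
  have hC : ∀ (ℓ : Fin 3 → ℤ) (σ : Equiv.Perm (Fin 3)) (η : Fin 3 → ℤ),
      discrGradApply ε yF ℓ σ η = C η := by
    intro ℓ σ η
    unfold discrGradApply
    have : ∀ α : Fin 3, ((η α : ℝ) / ε) • (yF (qEdge ε ℓ σ α + ε • e3 α) - yF (qEdge ε ℓ σ α))
        = ev fun i => (η α : ℝ) * F i α := by
      intro α
      rw [hyFdiff]
      ext i
      rw [PiLp.smul_apply]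
      show ((η α : ℝ) / ε) * (ε * F i α) = (η α : ℝ) * F i α
      field_simp
    rw [Finset.sum_congr rfl (fun α _ => this α), ev_sum]
  -- main computation
  rw [mul_eq_zero]
  right
  rw [Finset.sum_comm]
  apply Finset.sum_eq_zero
  intro σ _
  rw [Finset.sum_comm]
  apply Finset.sum_eq_zero
  intro η _
  have hline : ∀ ℓ : Fin 3 → Fin (n+1),
      fderiv ℝ (φ η) (discrGradApply ε yF (fun i => (ℓ i : ℤ)) σ η)
          (discrGradApply ε v (fun i => (ℓ i : ℤ)) σ η)
        = fderiv ℝ (φ η) (C η) (discrGradApply ε v (fun i => (ℓ i : ℤ)) σ η) := by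
    intro ℓ; rw [hC]
  rw [Finset.sum_congr rfl (fun ℓ _ => hline ℓ), ← map_sum]
  have hzero : (∑ ℓ : Fin 3 → Fin (n+1), discrGradApply ε v (fun i => (ℓ i : ℤ)) σ η) = 0 := by
    unfold discrGradApply
    rw [Finset.sum_comm]
    apply Finset.sum_eq_zero
    intro α _
    rw [← Finset.smul_sum]
    -- rewrite qEdge as latPt + shift and apply the key lemma
    set s : E3 := ev fun i => if σ.symm α < σ.symm i then ε else 0 with hs
    set w : E3 → E3 := fun x => v (x + s) with hwdef
    have hqs : ∀ ℓ : Fin 3 → ℤ, qEdge ε ℓ σ α = latPt ε ℓ + s := by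
      intro ℓ; rfl
    have hterm : ∀ ℓ : Fin 3 → Fin (n+1),
        v (qEdge ε (fun i => (ℓ i : ℤ)) σ α + ε • e3 α) - v (qEdge ε (fun i => (ℓ i : ℤ)) σ α)
        = w (latPt ε (fun i => (ℓ i : ℤ)) + ε • e3 α) - w (latPt ε (fun i => (ℓ i : ℤ))) := by
      intro ℓ
      rw [hwdef]
      simp only
      rw [hqs]
      congr 2
      abel
    rw [Finset.sum_congr rfl (fun ℓ _ => hterm ℓ)]
    rw [key_periodic n ε hε α w]
    · simp
    · intro x
      rw [hwdef]
      simp only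
      rw [add_right_comm]
      exact hper (x + s) α
  rw [hzero, map_zero]
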